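/- arXiv:2105.03006 — 2 statements merged into one kernel-verified Lean document; each statement's English description precedes it below -/
import Mathlib

section
/- RM satisfies the standard quarrel postulate: if W is a simple voting game on [n] and Ŵ is the game obtained by inducing a quarrel between players i and j, then R̂M_i ≤ RM_i and R̂M_j ≤ RM_j, where R̂M denotes the Recursive Measure in Ŵ and RM the Recursive Measure in W. -/
open Finset

variable {α : Type*} [Fintype α] [DecidableEq α]

/-- A simple voting game on the player set `α`: a monotone collection of winning
coalitions in which the empty coalition loses and the full coalition wins. -/
def SimpleVotingGame (W : Finset (Finset α)) : Prop :=
  (∀ S T : Finset α, S ∈ W → S ⊆ T → T ∈ W) ∧ (∅ : Finset α) ∉ W ∧ (univ : Finset α) ∈ W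

/-- Player `i` is YES-decisive in the division `S`. -/
def YesDecisive (W : Finset (Finset α)) (i : α) (S : Finset α) : Prop :=
  i ∈ S ∧ S ∈ W ∧ S.erase i ∉ W

/-- Player `i` is NO-decisive in the division `S`. -/
def NoDecisive (W : Finset (Finset α)) (i : α) (S : Finset α) : Prop :=
  i ∉ S ∧ S ∉ W ∧ insert i S ∈ W

/-- The loyal children of a winning division `S`: the winning divisions `S \ {k}`, `k ∈ S`. -/
def LCwin (W : Finset (Finset α)) (S : Finset α) : Finset (Finset α) :=
  (S.image fun k => S.erase k).filter (· ∈ W)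

/-- The loyal children of a losing division `S`: the losing divisions `S ∪ {k}`, `k ∉ S`. -/
def LCloss (W : Finset (Finset α)) (S : Finset α) : Finset (Finset α) :=
  (Sᶜ.image fun k => insert k S).filter (· ∉ W)

/-- The YES-efficacy score `α⁺_i(S)`: `1` if `i` is YES-decisive in `S`, `0` if `S` is
losing or `i ∉ S`, and otherwise the arithmetic mean of `α⁺_i` over the loyal children. -/
noncomputable def alphaPlus (W : Finset (Finset α)) (i : α) (S : Finset α) : ℝ :=
  if i ∈ S ∧ S ∈ W ∧ S.erase i ∉ W then 1
  else if S ∉ W ∨ i ∉ S then 0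
  else (∑ T ∈ (LCwin W S).attach, alphaPlus W i T.1) / (LCwin W S).card
termination_by S.card
decreasing_by
  obtain ⟨T, hT⟩ := T
  simp only [LCwin, Finset.mem_filter, Finset.mem_image] at hT
  obtain ⟨⟨k, hk, rfl⟩, -⟩ := hT
  simpa using Finset.card_erase_lt_of_mem hk

/-- The NO-efficacy score `α⁻_i(S)`: `1` if `i` is NO-decisive in `S`, `0` if `S` is
winning or `i ∈ S`, and otherwise the arithmetic mean of `α⁻_i` over the loyal children. -/
noncomputable def alphaMinus (W : Finset (Finset α)) (i : α) (S : Finset α) : ℝ :=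
  if i ∉ S ∧ S ∉ W ∧ insert i S ∈ W then 1
  else if S ∈ W ∨ i ∈ S then 0
  else (∑ T ∈ (LCloss W S).attach, alphaMinus W i T.1) / (LCloss W S).card
termination_by Sᶜ.card
decreasing_by
  obtain ⟨T, hT⟩ := T
  simp only [LCloss, Finset.mem_filter, Finset.mem_image] at hT
  obtain ⟨⟨k, hk, rfl⟩, -⟩ := hT
  rw [Finset.compl_insert]
  exact Finset.card_erase_lt_of_mem hk

/-- The efficacy score `α_i(S) = α⁺_i(S) + α⁻_i(S)`. -/
noncomputable def alphaScore (W : Finset (Finset α)) (i : α) (S : Finset α) : ℝ :=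
  alphaPlus W i S + alphaMinus W i S

/-- The Recursive Measure of YES-voting power (a priori, equiprobable divisions). -/
noncomputable def RMplus (W : Finset (Finset α)) (i : α) : ℝ :=
  (1 / 2 ^ Fintype.card α) * ∑ S : Finset α, alphaPlus W i S

/-- The Recursive Measure of NO-voting power (a priori, equiprobable divisions). -/
noncomputable def RMminus (W : Finset (Finset α)) (i : α) : ℝ :=
  (1 / 2 ^ Fintype.card α) * ∑ S : Finset α, alphaMinus W i S

/-- The Recursive Measure of voting power of player `i` (a priori):
`RM_i = 2^{-m} · Σ_S α_i(S)` where `m` is the number of players. -/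
noncomputable def RM (W : Finset (Finset α)) (i : α) : ℝ :=
  (1 / 2 ^ Fintype.card α) * ∑ S : Finset α, alphaScore W i S

/-- `d` is a dummy voter: `d` is decisive in no division. -/
def IsDummy (W : Finset (Finset α)) (d : α) : Prop :=
  ∀ S : Finset α, d ∉ S → (insert d S ∈ W ↔ S ∈ W)

/-- Player `j` weakly dominates player `i`. -/
def WeaklyDominates (W : Finset (Finset α)) (j i : α) : Prop :=
  ∀ S : Finset α, i ∉ S → j ∉ S → insert i S ∈ W → insert j S ∈ W

/-- `What` is the game obtained from `W` by player `j` donating its vote to player `i`. -/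
def Donation (W What : Finset (Finset α)) (i j : α) : Prop :=
  ∀ S : Finset α, i ∉ S → j ∉ S →
    (insert i (insert j S) ∈ What ↔ insert i (insert j S) ∈ W) ∧
    (insert i S ∈ What ↔ insert i (insert j S) ∈ W) ∧
    (insert j S ∈ What ↔ S ∈ W) ∧
    (S ∈ What ↔ S ∈ W)

/-- `What` is obtained from `W` by inducing a (weak, symmetric) quarrel between `i` and `j`. -/
def Quarrel (W What : Finset (Finset α)) (i j : α) : Prop :=
  ∀ S : Finset α, i ∉ S → j ∉ S →
    (insert i (insert j S) ∈ What ↔ (insert i S ∈ W ∨ insert j S ∈ W)) ∧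
    (S ∈ What ↔ (insert i S ∈ W ∧ insert j S ∈ W)) ∧
    (insert i S ∈ What ↔ insert i S ∈ W) ∧
    (insert j S ∈ What ↔ insert j S ∈ W)

/-- The voting-independent (product) probability of a division `S`, given the
individual YES-vote probabilities `p`. -/
noncomputable def prodDist (p : α → ℝ) (S : Finset α) : ℝ :=
  (∏ k ∈ S, p k) * ∏ k ∈ Sᶜ, (1 - p k)

/-- The generalized Recursive Measure of YES-voting power under a
voting-independent probability distribution with vote probabilities `p`. -/
noncomputable def RMplusP (W : Finset (Finset α)) (p : α → ℝ) (i : α) : ℝ :=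
  ∑ S : Finset α, alphaPlus W i S * prodDist p S

/-- The generalized Recursive Measure of NO-voting power under a
voting-independent probability distribution with vote probabilities `p`. -/
noncomputable def RMminusP (W : Finset (Finset α)) (p : α → ℝ) (i : α) : ℝ :=
  ∑ S : Finset α, alphaMinus W i S * prodDist p S


set_option linter.unusedSectionVars false

section Aux

variable {α : Type*} [Fintype α] [DecidableEq α]

lemma mem_LCwin {W : Finset (Finset α)} {S X : Finset α} :
    X ∈ LCwin W S ↔ (∃ k ∈ S, S.erase k = X) ∧ X ∈ W := by
  simp [LCwin]

lemma mem_LCloss {W : Finset (Finset α)} {S X : Finset α} :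
    X ∈ LCloss W S ↔ (∃ k ∈ Sᶜ, insert k S = X) ∧ X ∉ W := by
  simp [LCloss]

lemma alphaPlus_nonneg (W : Finset (Finset α)) (i : α) (S : Finset α) :
    0 ≤ alphaPlus W i S := by
  rw [alphaPlus]
  split
  · norm_num
  split
  · norm_num
  · apply div_nonneg _ (Nat.cast_nonneg _)
    apply Finset.sum_nonneg
    intro T _
    exact alphaPlus_nonneg W i T.1
termination_by S.card
decreasing_by
  obtain ⟨T, hT⟩ := T
  simp only [LCwin, Finset.mem_filter, Finset.mem_image] at hT
  obtain ⟨⟨k, hk, rfl⟩, -⟩ := hT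
  simpa using Finset.card_erase_lt_of_mem hk

lemma alphaPlus_le_one (W : Finset (Finset α)) (i : α) (S : Finset α) :
    alphaPlus W i S ≤ 1 := by
  rw [alphaPlus]
  split
  · norm_num
  split
  · norm_num
  · apply div_le_one_of_le₀ _ (Nat.cast_nonneg _)
    calc (∑ T ∈ (LCwin W S).attach, alphaPlus W i T.1)
        ≤ ∑ _T ∈ (LCwin W S).attach, (1:ℝ) := by
          apply Finset.sum_le_sum
          intro T _
          exact alphaPlus_le_one W i T.1
      _ = (LCwin W S).card := by simp
termination_by S.card
decreasing_by
  obtain ⟨T, hT⟩ := T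
  simp only [LCwin, Finset.mem_filter, Finset.mem_image] at hT
  obtain ⟨⟨k, hk, rfl⟩, -⟩ := hT
  simpa using Finset.card_erase_lt_of_mem hk

lemma alphaMinus_nonneg (W : Finset (Finset α)) (i : α) (S : Finset α) :
    0 ≤ alphaMinus W i S := by
  rw [alphaMinus]
  split
  · norm_num
  split
  · norm_num
  · apply div_nonneg _ (Nat.cast_nonneg _)
    apply Finset.sum_nonneg
    intro T _
    exact alphaMinus_nonneg W i T.1
termination_by Sᶜ.card
decreasing_by
  obtain ⟨T, hT⟩ := T
  simp only [LCloss, Finset.mem_filter, Finset.mem_image] at hT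
  obtain ⟨⟨k, hk, rfl⟩, -⟩ := hT
  rw [Finset.compl_insert]
  exact Finset.card_erase_lt_of_mem hk

lemma alphaMinus_le_one (W : Finset (Finset α)) (i : α) (S : Finset α) :
    alphaMinus W i S ≤ 1 := by
  rw [alphaMinus]
  split
  · norm_num
  split
  · norm_num
  · apply div_le_one_of_le₀ _ (Nat.cast_nonneg _)
    calc (∑ T ∈ (LCloss W S).attach, alphaMinus W i T.1)
        ≤ ∑ _T ∈ (LCloss W S).attach, (1:ℝ) := by
          apply Finset.sum_le_sum
          intro T _
          exact alphaMinus_le_one W i T.1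
      _ = (LCloss W S).card := by simp
termination_by Sᶜ.card
decreasing_by
  obtain ⟨T, hT⟩ := T
  simp only [LCloss, Finset.mem_filter, Finset.mem_image] at hT
  obtain ⟨⟨k, hk, rfl⟩, -⟩ := hT
  rw [Finset.compl_insert]
  exact Finset.card_erase_lt_of_mem hk

lemma alphaPlus_eq_one {W : Finset (Finset α)} {i : α} {S : Finset α}
    (h : i ∈ S ∧ S ∈ W ∧ S.erase i ∉ W) : alphaPlus W i S = 1 := by
  rw [alphaPlus, if_pos h]

lemma alphaPlus_eq_zero {W : Finset (Finset α)} {i : α} {S : Finset α}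
    (h : S ∉ W ∨ i ∉ S) : alphaPlus W i S = 0 := by
  rw [alphaPlus, if_neg (by tauto), if_pos h]

lemma alphaPlus_eq_avg {W : Finset (Finset α)} {i : α} {S : Finset α}
    (h1 : i ∈ S) (h2 : S ∈ W) (h3 : S.erase i ∈ W) :
    alphaPlus W i S = (∑ X ∈ LCwin W S, alphaPlus W i X) / (LCwin W S).card := by
  rw [alphaPlus, if_neg (by tauto), if_neg (by tauto), Finset.sum_attach]

lemma alphaMinus_eq_one {W : Finset (Finset α)} {i : α} {S : Finset α}
    (h : i ∉ S ∧ S ∉ W ∧ insert i S ∈ W) : alphaMinus W i S = 1 := by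
  rw [alphaMinus, if_pos h]

lemma alphaMinus_eq_zero {W : Finset (Finset α)} {i : α} {S : Finset α}
    (h : S ∈ W ∨ i ∈ S) : alphaMinus W i S = 0 := by
  rw [alphaMinus, if_neg (by tauto), if_pos h]

lemma alphaMinus_eq_avg {W : Finset (Finset α)} {i : α} {S : Finset α}
    (h1 : i ∉ S) (h2 : S ∉ W) (h3 : insert i S ∉ W) :
    alphaMinus W i S = (∑ X ∈ LCloss W S, alphaMinus W i X) / (LCloss W S).card := by
  rw [alphaMinus, if_neg (by tauto), if_neg (by tauto), Finset.sum_attach]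

lemma mean_le_mean {β : Type*} [DecidableEq β] (A B : Finset β) (f g : β → ℝ)
    (hAB : A ⊆ B) (hA : A.Nonempty)
    (hfg : ∀ X ∈ A, f X ≤ g X)
    (hg1 : ∀ X ∈ A, g X ≤ 1)
    (hextra : ∀ X ∈ B \ A, g X = 1) :
    (∑ X ∈ A, f X) / A.card ≤ (∑ X ∈ B, g X) / B.card := by
  have hA0 : (0:ℝ) < A.card := by exact_mod_cast Finset.card_pos.2 hA
  have hcc : (A.card : ℝ) ≤ B.card := by exact_mod_cast Finset.card_le_card hAB
  have hB0 : (0:ℝ) < B.card := lt_of_lt_of_le hA0 hcc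
  have hsum : ∑ X ∈ B, g X = ((B.card : ℝ) - A.card) + ∑ X ∈ A, g X := by
    rw [← Finset.sum_sdiff hAB]
    congr 1
    rw [Finset.sum_congr rfl hextra, Finset.sum_const, nsmul_eq_mul, mul_one,
      Finset.card_sdiff_of_subset hAB, Nat.cast_sub (Finset.card_le_card hAB)]
  have h1 : ∑ X ∈ A, f X ≤ ∑ X ∈ A, g X := Finset.sum_le_sum hfg
  have h2 : ∑ X ∈ A, g X ≤ (A.card : ℝ) := by
    calc ∑ X ∈ A, g X ≤ ∑ _X ∈ A, (1:ℝ) := Finset.sum_le_sum hg1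
      _ = A.card := by simp
  rw [div_le_div_iff₀ hA0 hB0, hsum]
  nlinarith [mul_nonneg (sub_nonneg.2 h2) (sub_nonneg.2 hcc),
    mul_nonneg (sub_nonneg.2 h1) hB0.le]

lemma alphaPlus_mono (W What : Finset (Finset α)) (i : α)
    (F1 : ∀ S : Finset α, i ∈ S → S ∈ What → S ∈ W)
    (F2 : ∀ S : Finset α, i ∉ S → S ∈ W → S ∈ What)
    (F3 : ∀ S : Finset α, i ∉ S → S ∈ What → insert i S ∈ What)
    (S : Finset α) : alphaPlus What i S ≤ alphaPlus W i S := by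
  by_cases hiS : i ∈ S
  · by_cases hSh : S ∈ What
    · have hSW : S ∈ W := F1 S hiS hSh
      by_cases hd : S.erase i ∈ What
      · by_cases hdW : S.erase i ∈ W
        · -- recursive case
          rw [alphaPlus_eq_avg hiS hSh hd, alphaPlus_eq_avg hiS hSW hdW]
          apply mean_le_mean
          · intro X hX
            rw [mem_LCwin] at hX ⊢
            obtain ⟨⟨k, hk, rfl⟩, hXh⟩ := hX
            refine ⟨⟨k, hk, rfl⟩, ?_⟩
            by_cases hki : k = i
            · subst hki; exact hdW
            · exact F1 _ (Finset.mem_erase.2 ⟨fun h => hki h.symm, hiS⟩) hXh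
          · exact ⟨S.erase i, mem_LCwin.2 ⟨⟨i, hiS, rfl⟩, hd⟩⟩
          · intro X hX
            obtain ⟨⟨k, hk, rfl⟩, -⟩ := mem_LCwin.1 hX
            exact alphaPlus_mono W What i F1 F2 F3 (S.erase k)
          · intro X _
            exact alphaPlus_le_one W i X
          · intro X hX
            obtain ⟨hXB, hXA⟩ := Finset.mem_sdiff.1 hX
            obtain ⟨⟨m, hm, rfl⟩, hXW⟩ := mem_LCwin.1 hXB
            have hXh : S.erase m ∉ What := fun h => hXA (mem_LCwin.2 ⟨⟨m, hm, rfl⟩, h⟩)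
            have hmi : m ≠ i := by rintro rfl; exact hXh hd
            have hiX : i ∈ S.erase m := Finset.mem_erase.2 ⟨fun h => hmi h.symm, hiS⟩
            have hx : (S.erase m).erase i ∉ W := by
              intro hcon
              have h1 : (S.erase m).erase i ∈ What :=
                F2 _ (Finset.notMem_erase i _) hcon
              have h2 : insert i ((S.erase m).erase i) ∈ What :=
                F3 _ (Finset.notMem_erase i _) h1
              rw [Finset.insert_erase hiX] at h2
              exact hXh h2
            exact alphaPlus_eq_one ⟨hiX, hXW, hx⟩
        · rw [alphaPlus_eq_one ⟨hiS, hSW, hdW⟩]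
          exact alphaPlus_le_one What i S
      · have hdW : S.erase i ∉ W := fun h => hd (F2 _ (Finset.notMem_erase _ _) h)
        rw [alphaPlus_eq_one ⟨hiS, hSh, hd⟩, alphaPlus_eq_one ⟨hiS, hSW, hdW⟩]
    · rw [alphaPlus_eq_zero (Or.inl hSh)]
      exact alphaPlus_nonneg W i S
  · rw [alphaPlus_eq_zero (Or.inr hiS)]
    exact alphaPlus_nonneg W i S
termination_by S.card
decreasing_by
  exact Finset.card_erase_lt_of_mem hk

lemma alphaMinus_mono (W What : Finset (Finset α)) (i : α)
    (F1 : ∀ S : Finset α, i ∈ S → S ∈ What → S ∈ W)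
    (F2 : ∀ S : Finset α, i ∉ S → S ∈ W → S ∈ What)
    (F3 : ∀ S : Finset α, i ∉ S → S ∈ What → insert i S ∈ What)
    (S : Finset α) : alphaMinus What i S ≤ alphaMinus W i S := by
  by_cases hiS : i ∈ S
  · rw [alphaMinus_eq_zero (Or.inr hiS)]
    exact alphaMinus_nonneg W i S
  · by_cases hSh : S ∈ What
    · rw [alphaMinus_eq_zero (Or.inl hSh)]
      exact alphaMinus_nonneg W i S
    · have hSW : S ∉ W := fun h => hSh (F2 S hiS h)
      by_cases hd : insert i S ∈ What
      · have hdW : insert i S ∈ W := F1 _ (Finset.mem_insert_self i S) hd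
        rw [alphaMinus_eq_one ⟨hiS, hSh, hd⟩, alphaMinus_eq_one ⟨hiS, hSW, hdW⟩]
      · by_cases hdW : insert i S ∈ W
        · rw [alphaMinus_eq_one ⟨hiS, hSW, hdW⟩]
          exact alphaMinus_le_one What i S
        · -- recursive case
          rw [alphaMinus_eq_avg hiS hSh hd, alphaMinus_eq_avg hiS hSW hdW]
          apply mean_le_mean
          · intro X hX
            rw [mem_LCloss] at hX ⊢
            obtain ⟨⟨k, hk, rfl⟩, hXh⟩ := hX
            refine ⟨⟨k, hk, rfl⟩, ?_⟩
            by_cases hki : k = i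
            · subst hki; exact hdW
            · intro hcon
              have hik : i ∉ insert k S := by
                simp only [Finset.mem_insert]
                rintro (rfl | h)
                · exact hki rfl
                · exact hiS h
              exact hXh (F2 _ hik hcon)
          · exact ⟨insert i S, mem_LCloss.2 ⟨⟨i, Finset.mem_compl.2 hiS, rfl⟩, hd⟩⟩
          · intro X hX
            obtain ⟨⟨k, hk, rfl⟩, -⟩ := mem_LCloss.1 hX
            exact alphaMinus_mono W What i F1 F2 F3 (insert k S)
          · intro X _
            exact alphaMinus_le_one W i X
          · intro X hX
            obtain ⟨hXB, hXA⟩ := Finset.mem_sdiff.1 hX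
            obtain ⟨⟨m, hm, rfl⟩, hXW⟩ := mem_LCloss.1 hXB
            have hXh : insert m S ∈ What := by
              by_contra hcon
              exact hXA (mem_LCloss.2 ⟨⟨m, hm, rfl⟩, hcon⟩)
            have hmi : m ≠ i := by rintro rfl; exact hd hXh
            have hiX : i ∉ insert m S := by
              simp only [Finset.mem_insert]
              rintro (rfl | h)
              · exact hmi rfl
              · exact hiS h
            have hx : insert i (insert m S) ∈ W :=
              F1 _ (Finset.mem_insert_self i _) (F3 _ hiX hXh)
            exact alphaMinus_eq_one ⟨hiX, hXW, hx⟩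
termination_by Sᶜ.card
decreasing_by
  rw [Finset.compl_insert]
  exact Finset.card_erase_lt_of_mem hk

end Aux

section QuarrelFacts

variable {α : Type*} [Fintype α] [DecidableEq α]

lemma quarrel_F1 {W What : Finset (Finset α)} {i j : α}
    (hW : SimpleVotingGame W) (hij : i ≠ j) (hq : Quarrel W What i j) :
    ∀ S : Finset α, i ∈ S → S ∈ What → S ∈ W := by
  intro S hi hSh
  by_cases hj : j ∈ S
  · have hj' : j ∈ S.erase i := Finset.mem_erase.2 ⟨hij.symm, hj⟩
    have hi₀ : i ∉ (S.erase i).erase j :=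
      fun h => Finset.notMem_erase i S (Finset.mem_of_mem_erase h)
    have hj₀ : j ∉ (S.erase i).erase j := Finset.notMem_erase j _
    have hsub : (S.erase i).erase j ⊆ S :=
      (Finset.erase_subset _ _).trans (Finset.erase_subset _ _)
    have c := (hq _ hi₀ hj₀).1
    rw [Finset.insert_erase hj', Finset.insert_erase hi] at c
    rcases c.mp hSh with h | h
    · exact hW.1 _ _ h (Finset.insert_subset hi hsub)
    · exact hW.1 _ _ h (Finset.erase_subset _ _)
  · have hj' : j ∉ S.erase i := fun h => hj (Finset.mem_of_mem_erase h)
    have c := (hq (S.erase i) (Finset.notMem_erase i S) hj').2.2.1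
    rw [Finset.insert_erase hi] at c
    exact c.mp hSh

lemma quarrel_F2 {W What : Finset (Finset α)} {i j : α}
    (hW : SimpleVotingGame W) (hq : Quarrel W What i j) :
    ∀ S : Finset α, i ∉ S → S ∈ W → S ∈ What := by
  intro S hi hSW
  by_cases hj : j ∈ S
  · have c := (hq (S.erase j) (fun h => hi (Finset.mem_of_mem_erase h))
      (Finset.notMem_erase j S)).2.2.2
    rw [Finset.insert_erase hj] at c
    exact c.mpr hSW
  · exact (hq S hi hj).2.1.mpr
      ⟨hW.1 _ _ hSW (Finset.subset_insert _ _), hW.1 _ _ hSW (Finset.subset_insert _ _)⟩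

lemma quarrel_F3 {W What : Finset (Finset α)} {i j : α}
    (hq : Quarrel W What i j) :
    ∀ S : Finset α, i ∉ S → S ∈ What → insert i S ∈ What := by
  intro S hi hSh
  by_cases hj : j ∈ S
  · obtain ⟨c1, -, -, c4⟩ := hq (S.erase j) (fun h => hi (Finset.mem_of_mem_erase h))
      (Finset.notMem_erase j S)
    rw [Finset.insert_erase hj] at c1 c4
    exact c1.mpr (Or.inr (c4.mp hSh))
  · obtain ⟨-, c2, c3, -⟩ := hq S hi hj
    exact c3.mpr (c2.mp hSh).1

lemma quarrel_swap {W What : Finset (Finset α)} {i j : α}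
    (hq : Quarrel W What i j) : Quarrel W What j i := by
  intro S hj hi
  obtain ⟨c1, c2, c3, c4⟩ := hq S hi hj
  refine ⟨?_, c2.trans and_comm, c4, c3⟩
  rw [Finset.insert_comm]
  exact c1.trans or_comm

lemma rm_le_of_quarrel {α : Type*} [Fintype α] [DecidableEq α]
    {W What : Finset (Finset α)} {i j : α}
    (hW : SimpleVotingGame W) (hij : i ≠ j) (hq : Quarrel W What i j) :
    RM What i ≤ RM W i := by
  have F1 := quarrel_F1 hW hij hq
  have F2 := quarrel_F2 hW hq
  have F3 := quarrel_F3 hq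
  unfold RM alphaScore
  apply mul_le_mul_of_nonneg_left _ (by positivity)
  apply Finset.sum_le_sum
  intro S _
  exact add_le_add (alphaPlus_mono W What i F1 F2 F3 S)
    (alphaMinus_mono W What i F1 F2 F3 S)

end QuarrelFacts

/-- RM satisfies the standard quarrel postulate. -/
theorem rm_quarrel {n : ℕ} (W What : Finset (Finset (Fin n)))
    (hW : SimpleVotingGame W) (i j : Fin n) (hij : i ≠ j)
    (hq : Quarrel W What i j) :
    RM What i ≤ RM W i ∧ RM What j ≤ RM W j := by
  exact ⟨rm_le_of_quarrel hW hij hq, rm_le_of_quarrel hW hij.symm (quarrel_swap hq)⟩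
end

section
/- Let W be a simple voting game on [n], let G^N be the game on [n]∪{0} with winning coalitions W^N = { S∪{0} : S⊆[n] } ∪ W, and let P be a voting-independent probability distribution on divisions of [n]∪{0}, i.e. the product distribution determined by independent vote probabilities p_k∈[0,1] for each player k∈[n]∪{0}. Then for any players i,j∈[n], the generalized Recursive Measures of NO-voting power RM⁻_i(G) = Σ_{S⊆[n]} α⁻_{i,W}(S)·P_{[n]}(S) (where P_{[n]} is the induced product distribution on divisions of [n]) and RM⁻_i(G^N) = Σ_{T⊆[n]∪{0}} α⁻_{i,G^N}(T)·P(T) satisfy RM⁻_i(G^N)·RM⁻_j(G) = RM⁻_i(G)·RM⁻_j(G^N); indeed RM⁻_i(G^N) = (1−p_0)·RM⁻_i(G) for every i∈[n]. -/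
open Finset

variable {α : Type*} [Fintype α] [DecidableEq α]

section AddedNoBlockerAux

variable {n : ℕ} {W : Finset (Finset (Fin n))} {WN : Finset (Finset (Option (Fin n)))}

lemma anb_mem_of_none
    (hWN : WN = (univ : Finset (Finset (Fin n))).image (fun S => insert none (S.image some)) ∪
      W.image (fun S => S.image some))
    {T : Finset (Option (Fin n))} (hT : none ∈ T) : T ∈ WN := by
  subst hWN
  refine mem_union_left _ (mem_image.2 ⟨eraseNone T, mem_univ _, ?_⟩)
  rw [image_some_eraseNone, insert_erase hT]

lemma anb_mem_image
    (hWN : WN = (univ : Finset (Finset (Fin n))).image (fun S => insert none (S.image some)) ∪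
      W.image (fun S => S.image some))
    (S : Finset (Fin n)) : S.image some ∈ WN ↔ S ∈ W := by
  subst hWN
  simp only [mem_union, mem_image, mem_univ, true_and]
  constructor
  · rintro (⟨U, hU⟩ | ⟨U, hUW, hU⟩)
    · exfalso
      have : none ∈ S.image some := hU ▸ mem_insert_self _ _
      simp at this
    · rwa [← Finset.image_injective (Option.some_injective _) hU]
  · intro h; exact Or.inr ⟨S, h, rfl⟩

lemma anb_LCloss
    (hWN : WN = (univ : Finset (Finset (Fin n))).image (fun S => insert none (S.image some)) ∪
      W.image (fun S => S.image some))
    (S : Finset (Fin n)) :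
    LCloss WN (S.image some) = (LCloss W S).image (fun U => U.image some) := by
  ext T
  simp only [LCloss, mem_filter, mem_image, mem_compl]
  constructor
  · rintro ⟨⟨k, hk, rfl⟩, hT⟩
    match k with
    | none => exact absurd (anb_mem_of_none hWN (mem_insert_self _ _)) hT
    | some m =>
      have hm : m ∉ S := by simpa using hk
      rw [← image_insert] at hT ⊢
      exact ⟨insert m S, ⟨⟨m, by simpa using hm, rfl⟩,
        fun h => hT ((anb_mem_image hWN _).2 h)⟩, rfl⟩
  · rintro ⟨U, ⟨⟨m, hm, rfl⟩, hUW⟩, rfl⟩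
    refine ⟨⟨some m, by simpa using hm, ?_⟩, ?_⟩
    · rw [← image_insert]
    · rw [anb_mem_image hWN]; exact hUW

lemma anb_alphaMinus
    (hWN : WN = (univ : Finset (Finset (Fin n))).image (fun S => insert none (S.image some)) ∪
      W.image (fun S => S.image some))
    (i : Fin n) (S : Finset (Fin n)) :
    alphaMinus WN (some i) (S.image some) = alphaMinus W i S := by
  have h1 : (some i ∈ S.image some) ↔ i ∈ S := by simp
  have h2 : S.image some ∈ WN ↔ S ∈ W := anb_mem_image hWN S
  have h3 : insert (some i) (S.image some) ∈ WN ↔ insert i S ∈ W := by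
    rw [← image_insert]; exact anb_mem_image hWN _
  rw [alphaMinus, alphaMinus]
  by_cases hdec : i ∉ S ∧ S ∉ W ∧ insert i S ∈ W
  · rw [if_pos hdec, if_pos ⟨h1.not.2 hdec.1, h2.not.2 hdec.2.1, h3.2 hdec.2.2⟩]
  · rw [if_neg hdec, if_neg (by rw [h1, h2, h3]; exact hdec)]
    by_cases hwin : S ∈ W ∨ i ∈ S
    · rw [if_pos hwin, if_pos (by rw [h1, h2]; exact hwin)]
    · rw [if_neg hwin, if_neg (by rw [h1, h2]; exact hwin)]
      rw [anb_LCloss hWN S]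
      have hinj : ∀ a ∈ LCloss W S, ∀ b ∈ LCloss W S,
          a.image some = b.image some → a = b :=
        fun a _ b _ h => Finset.image_injective (Option.some_injective _) h
      rw [Finset.sum_attach _ (fun T => alphaMinus WN (some i) T),
        Finset.sum_attach _ (fun T => alphaMinus W i T),
        Finset.sum_image hinj, Finset.card_image_of_injOn hinj]
      congr 1
      refine Finset.sum_congr rfl fun U hU => ?_
      exact anb_alphaMinus hWN i U
termination_by Sᶜ.card
decreasing_by
  simp only [LCloss, Finset.mem_filter, Finset.mem_image] at hU
  obtain ⟨⟨k, hk, rfl⟩, -⟩ := hU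
  rw [Finset.compl_insert]
  exact Finset.card_erase_lt_of_mem hk

lemma anb_alphaMinus_none
    (hWN : WN = (univ : Finset (Finset (Fin n))).image (fun S => insert none (S.image some)) ∪
      W.image (fun S => S.image some))
    (i : Fin n) {T : Finset (Option (Fin n))} (hT : none ∈ T) :
    alphaMinus WN (some i) T = 0 := by
  have h := anb_mem_of_none (W := W) hWN hT
  rw [alphaMinus, if_neg (by tauto), if_pos (Or.inl h)]

lemma anb_prodDist (p : Option (Fin n) → ℝ) (S : Finset (Fin n)) :
    prodDist p (S.image some) = (1 - p none) * prodDist (fun k => p (some k)) S := by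
  have hcompl : (S.image some)ᶜ = insert none (Sᶜ.image some) := by
    ext x
    match x with
    | none => simp
    | some m => simp
  have hinj : ∀ (t : Finset (Fin n)), ∀ a ∈ t, ∀ b ∈ t,
      (some a : Option (Fin n)) = some b → a = b :=
    fun _ a _ b _ h => Option.some_injective _ h
  rw [prodDist, prodDist, hcompl, prod_insert (by simp),
    Finset.prod_image (hinj S), Finset.prod_image (hinj Sᶜ)]
  ring

end AddedNoBlockerAux

/-- an added NO-blocker preserves relative generalized NO-power under any
voting-independent probability distribution; indeed `RM⁻_i(G^N) = (1 - p_0) · RM⁻_i(G)`. -/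
theorem added_no_blocker_prob {n : ℕ} (W : Finset (Finset (Fin n)))
    (hW : SimpleVotingGame W)
    (WN : Finset (Finset (Option (Fin n))))
    (hWN : WN = (univ : Finset (Finset (Fin n))).image (fun S => insert none (S.image some)) ∪
      W.image (fun S => S.image some))
    (p : Option (Fin n) → ℝ) (hp : ∀ k, 0 ≤ p k ∧ p k ≤ 1) :
    (∀ i j : Fin n,
      RMminusP WN p (some i) * RMminusP W (fun k => p (some k)) j =
        RMminusP W (fun k => p (some k)) i * RMminusP WN p (some j)) ∧
    (∀ i : Fin n,
      RMminusP WN p (some i) = (1 - p none) * RMminusP W (fun k => p (some k)) i) := by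
  have key : ∀ i : Fin n,
      RMminusP WN p (some i) = (1 - p none) * RMminusP W (fun k => p (some k)) i := by
    intro i
    rw [RMminusP, RMminusP, mul_sum,
      ← Finset.sum_filter_add_sum_filter_not univ (fun T => none ∈ T)
        (fun T => alphaMinus WN (some i) T * prodDist p T)]
    have hz : ∑ T ∈ univ.filter (fun T => none ∈ T),
        alphaMinus WN (some i) T * prodDist p T = 0 := by
      refine Finset.sum_eq_zero fun T hT => ?_
      rw [anb_alphaMinus_none hWN i (Finset.mem_filter.1 hT).2, zero_mul]
    have himg : univ.filter (fun T : Finset (Option (Fin n)) => ¬ none ∈ T) =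
        (univ : Finset (Finset (Fin n))).image (fun S => S.image some) := by
      ext T
      simp only [mem_filter, mem_univ, true_and, mem_image]
      constructor
      · intro hT
        exact ⟨eraseNone T, by rw [image_some_eraseNone, erase_eq_of_notMem hT]⟩
      · rintro ⟨S, rfl⟩
        simp
    have hinj : ∀ a ∈ (univ : Finset (Finset (Fin n))), ∀ b ∈ univ,
        a.image some = b.image some → a = b :=
      fun a _ b _ h => Finset.image_injective (Option.some_injective _) h
    rw [hz, zero_add, himg, Finset.sum_image hinj]
    refine Finset.sum_congr rfl fun S _ => ?_
    rw [anb_alphaMinus hWN i S, anb_prodDist p S]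
    ring
  exact ⟨fun i j => by rw [key i, key j]; ring, key⟩
end
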